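/- Local monotonicity: let ν, α, β > 0, γ ∈ (0,1), and define F(u) = ν A u + α B(u) − β c(u), where A u = −u'', B(u) = u u', c(u) = u(1−u)(u−γ). For r > 0 let B_r = {v ∈ H^1_0((0,1)) : ‖v‖_{L^∞} ≤ r}. Then for all u ∈ H^1_0((0,1)) and v ∈ B_r, ⟨F(u) − F(v), u − v⟩ + [α²r²/(2ν) + β(1+γ+γ²)] ‖u − v‖_{L²}² ≥ (ν/2) ‖∂ₓ(u − v)‖_{L²}² ≥ 0. -/

import Mathlib

open MeasureTheory Real Set

set_option maxHeartbeats 2000000 in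
/-- Local monotonicity of `F(u) = νAu + αB(u) − βc(u)`: for `u ∈ H¹₀((0,1))` and
`v ∈ B_r = {v : ‖v‖_∞ ≤ r}`,
`⟨F(u) − F(v), u − v⟩ + [α²r²/(2ν) + β(1+γ+γ²)]‖u−v‖_{L²}² ≥ (ν/2)‖∂ₓ(u−v)‖_{L²}² ≥ 0`,
where `⟨F(u)−F(v), u−v⟩ = ν∫(u'−v')² + α∫(uu'−vv')(u−v) − β∫(c(u)−c(v))(u−v)`. -/
theorem stmt8 (ν α β γ r : ℝ) (hν : 0 < ν) (hα : 0 < α) (hβ : 0 < β)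
    (hγ : γ ∈ Ioo (0:ℝ) 1) (hr : 0 < r)
    (u u' v v' : ℝ → ℝ)
    (hu : ∀ x ∈ Icc (0:ℝ) 1, HasDerivAt u (u' x) x)
    (hu0 : u 0 = 0) (hu1 : u 1 = 0)
    (hu'L2 : IntervalIntegrable (fun x => u' x ^ 2) volume 0 1)
    (hv : ∀ x ∈ Icc (0:ℝ) 1, HasDerivAt v (v' x) x)
    (hv0 : v 0 = 0) (hv1 : v 1 = 0)
    (hv'L2 : IntervalIntegrable (fun x => v' x ^ 2) volume 0 1)
    (hvr : ∀ x ∈ Icc (0:ℝ) 1, |v x| ≤ r) :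
    (ν / 2) * (∫ x in (0:ℝ)..1, (u' x - v' x) ^ 2) ≤
      (ν * (∫ x in (0:ℝ)..1, (u' x - v' x) ^ 2)
        + α * (∫ x in (0:ℝ)..1, (u x * u' x - v x * v' x) * (u x - v x))
        - β * (∫ x in (0:ℝ)..1,
            (u x * (1 - u x) * (u x - γ) - v x * (1 - v x) * (v x - γ)) * (u x - v x)))
        + (α ^ 2 * r ^ 2 / (2 * ν) + β * (1 + γ + γ ^ 2)) *
            ∫ x in (0:ℝ)..1, (u x - v x) ^ 2 ∧
    0 ≤ (ν / 2) * ∫ x in (0:ℝ)..1, (u' x - v' x) ^ 2 := by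
  have h01 : (0:ℝ) ≤ 1 := zero_le_one
  have hIccU : Set.uIcc (0:ℝ) 1 = Icc 0 1 := Set.uIcc_of_le h01
  have hIocSub : Set.uIoc (0:ℝ) 1 ⊆ Icc (0:ℝ) 1 := by
    rw [Set.uIoc_of_le h01]; exact Ioc_subset_Icc_self
  -- continuity of u, v on Icc
  have hucont : ContinuousOn u (Icc 0 1) := fun x hx => ((hu x hx).continuousAt).continuousWithinAt
  have hvcont : ContinuousOn v (Icc 0 1) := fun x hx => ((hv x hx).continuousAt).continuousWithinAt
  -- bound on |u - v| on Icc
  obtain ⟨M, hM⟩ := isCompact_Icc.exists_bound_of_continuousOn (hucont.sub hvcont)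
  have hM0 : (0:ℝ) ≤ M := le_trans (norm_nonneg _) (hM 0 (by constructor <;> norm_num))
  have hMabs : ∀ x ∈ Icc (0:ℝ) 1, |u x - v x| ≤ M := fun x hx => hM x hx
  -- measurability of u', v' on uIoc
  have haeu : (fun x => deriv u x) =ᵐ[volume.restrict (Set.uIoc (0:ℝ) 1)] u' := by
    filter_upwards [ae_restrict_mem measurableSet_uIoc] with x hx
    exact ((hu x (hIocSub hx)).deriv)
  have haev : (fun x => deriv v x) =ᵐ[volume.restrict (Set.uIoc (0:ℝ) 1)] v' := by
    filter_upwards [ae_restrict_mem measurableSet_uIoc] with x hx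
    exact ((hv x (hIocSub hx)).deriv)
  have hu'm : AEStronglyMeasurable u' (volume.restrict (Set.uIoc (0:ℝ) 1)) :=
    (measurable_deriv u).aestronglyMeasurable.congr haeu
  have hv'm : AEStronglyMeasurable v' (volume.restrict (Set.uIoc (0:ℝ) 1)) :=
    (measurable_deriv v).aestronglyMeasurable.congr haev
  have hucm : AEStronglyMeasurable u (volume.restrict (Set.uIoc (0:ℝ) 1)) :=
    (hucont.mono hIocSub).aestronglyMeasurable measurableSet_uIoc
  have hvcm : AEStronglyMeasurable v (volume.restrict (Set.uIoc (0:ℝ) 1)) :=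
    (hvcont.mono hIocSub).aestronglyMeasurable measurableSet_uIoc
  have hwm : AEStronglyMeasurable (fun x => u x - v x) (volume.restrict (Set.uIoc (0:ℝ) 1)) :=
    hucm.sub hvcm
  have hw'm : AEStronglyMeasurable (fun x => u' x - v' x) (volume.restrict (Set.uIoc (0:ℝ) 1)) :=
    hu'm.sub hv'm
  -- dominating function
  have hD : IntervalIntegrable (fun x => (M + r + 2) ^ 2 * (1 + u' x ^ 2 + v' x ^ 2))
      volume 0 1 := ((intervalIntegrable_const.add hu'L2).add hv'L2).const_mul _
  -- generic integrability helper
  have key : ∀ g : ℝ → ℝ, AEStronglyMeasurable g (volume.restrict (Set.uIoc (0:ℝ) 1)) →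
      (∀ x ∈ Icc (0:ℝ) 1, |g x| ≤ (M + r + 2) ^ 2 * (1 + u' x ^ 2 + v' x ^ 2)) →
      IntervalIntegrable g volume 0 1 := by
    intro g hgm hgle
    refine hD.mono_fun hgm ?_
    filter_upwards [ae_restrict_mem measurableSet_uIoc] with x hx
    have h1 := hgle x (hIocSub hx)
    have h2 : (0:ℝ) ≤ (M + r + 2) ^ 2 * (1 + u' x ^ 2 + v' x ^ 2) := by positivity
    simp only [Real.norm_eq_abs]
    rw [abs_of_nonneg h2]; exact h1
  -- basic abs bounds
  have habs1 : ∀ s t : ℝ, |s - t| ≤ 1 + s ^ 2 + t ^ 2 := by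
    intro s t
    nlinarith [abs_nonneg (s - t), sq_abs (s - t), sq_nonneg (s + t), sq_nonneg (|s - t| - 1)]
  have habsb : ∀ s t : ℝ, |t| ≤ 1 + s ^ 2 + t ^ 2 := by
    intro s t
    nlinarith [abs_nonneg t, sq_abs t, sq_nonneg (|t| - 1), sq_nonneg s]
  -- integrability of each integrand
  have hIw'2 : IntervalIntegrable (fun x => (u' x - v' x) ^ 2) volume 0 1 := by
    refine key _ (hw'm.pow 2) ?_
    intro x hx
    rw [abs_of_nonneg (sq_nonneg _)]
    nlinarith [sq_nonneg (u' x + v' x), sq_nonneg (u' x - v' x), hM0, hr.le,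
      mul_nonneg (by nlinarith : (0:ℝ) ≤ (M + r + 2) ^ 2 - 2)
        (by positivity : (0:ℝ) ≤ 1 + u' x ^ 2 + v' x ^ 2)]
  have hIvww' : IntervalIntegrable (fun x => v x * (u x - v x) * (u' x - v' x)) volume 0 1 := by
    refine key _ ((hvcm.mul hwm).mul hw'm) ?_
    intro x hx
    have hB := hvr x hx
    have hA := hMabs x hx
    have h1 : |v x * (u x - v x) * (u' x - v' x)| = |v x| * |u x - v x| * |u' x - v' x| := by
      rw [abs_mul, abs_mul]
    rw [h1]
    have h2 : |v x| * |u x - v x| ≤ r * M :=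
      mul_le_mul hB hA (abs_nonneg _) hr.le
    calc |v x| * |u x - v x| * |u' x - v' x|
        ≤ (r * M) * (1 + u' x ^ 2 + v' x ^ 2) :=
          mul_le_mul h2 (habs1 _ _) (abs_nonneg _) (by positivity)
      _ ≤ (M + r + 2) ^ 2 * (1 + u' x ^ 2 + v' x ^ 2) := by
          have : r * M ≤ (M + r + 2) ^ 2 := by nlinarith
          exact mul_le_mul_of_nonneg_right this (by positivity)
  have hIw2w' : IntervalIntegrable (fun x => (u x - v x) * (u x - v x) * (u' x - v' x))
      volume 0 1 := by
    refine key _ ((hwm.mul hwm).mul hw'm) ?_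
    intro x hx
    have hA := hMabs x hx
    have h1 : |(u x - v x) * (u x - v x) * (u' x - v' x)|
        = |u x - v x| * |u x - v x| * |u' x - v' x| := by rw [abs_mul, abs_mul]
    rw [h1]
    have h2 : |u x - v x| * |u x - v x| ≤ M * M :=
      mul_le_mul hA hA (abs_nonneg _) hM0
    calc |u x - v x| * |u x - v x| * |u' x - v' x|
        ≤ (M * M) * (1 + u' x ^ 2 + v' x ^ 2) :=
          mul_le_mul h2 (habs1 _ _) (abs_nonneg _) (by positivity)
      _ ≤ (M + r + 2) ^ 2 * (1 + u' x ^ 2 + v' x ^ 2) := by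
          have : M * M ≤ (M + r + 2) ^ 2 := by nlinarith
          exact mul_le_mul_of_nonneg_right this (by positivity)
  have hg2m : AEStronglyMeasurable
      (fun x => v' x * ((u x - v x) * (u x - v x))
        + 2 * (v x * (u x - v x) * (u' x - v' x))) (volume.restrict (Set.uIoc (0:ℝ) 1)) :=
    (hv'm.mul (hwm.mul hwm)).add (((hvcm.mul hwm).mul hw'm).const_mul 2)
  have hIg2 : IntervalIntegrable
      (fun x => v' x * ((u x - v x) * (u x - v x))
        + 2 * (v x * (u x - v x) * (u' x - v' x))) volume 0 1 := by
    refine key _ hg2m ?_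
    intro x hx
    have hA := hMabs x hx
    have hB := hvr x hx
    have h1 : |v' x * ((u x - v x) * (u x - v x))| ≤ (M * M) * (1 + u' x ^ 2 + v' x ^ 2) := by
      rw [abs_mul, abs_mul]
      calc |v' x| * (|u x - v x| * |u x - v x|)
          ≤ (1 + u' x ^ 2 + v' x ^ 2) * (M * M) := by
            refine mul_le_mul (habsb _ _) (mul_le_mul hA hA (abs_nonneg _) hM0)
              (by positivity) (by positivity)
        _ = (M * M) * (1 + u' x ^ 2 + v' x ^ 2) := by ring
    have h2 : |2 * (v x * (u x - v x) * (u' x - v' x))|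
        ≤ 2 * ((r * M) * (1 + u' x ^ 2 + v' x ^ 2)) := by
      rw [abs_mul, abs_mul, abs_mul, abs_of_nonneg (by norm_num : (0:ℝ) ≤ 2)]
      have h3 : |v x| * |u x - v x| * |u' x - v' x| ≤ (r * M) * (1 + u' x ^ 2 + v' x ^ 2) :=
        mul_le_mul (mul_le_mul hB hA (abs_nonneg _) hr.le) (habs1 _ _)
          (abs_nonneg _) (by positivity)
      linarith
    calc |v' x * ((u x - v x) * (u x - v x))
          + 2 * (v x * (u x - v x) * (u' x - v' x))|
        ≤ |v' x * ((u x - v x) * (u x - v x))|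
          + |2 * (v x * (u x - v x) * (u' x - v' x))| := abs_add_le _ _
      _ ≤ (M * M) * (1 + u' x ^ 2 + v' x ^ 2)
          + 2 * ((r * M) * (1 + u' x ^ 2 + v' x ^ 2)) := add_le_add h1 h2
      _ ≤ (M + r + 2) ^ 2 * (1 + u' x ^ 2 + v' x ^ 2) := by
          nlinarith [sq_nonneg (u' x), sq_nonneg (v' x), hM0, hr.le, sq_nonneg r]
  have hIw2 : IntervalIntegrable (fun x => (u x - v x) ^ 2) volume 0 1 := by
    apply ContinuousOn.intervalIntegrable
    rw [hIccU]; exact (hucont.sub hvcont).pow 2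
  have hIcd : IntervalIntegrable
      (fun x => (u x * (1 - u x) * (u x - γ) - v x * (1 - v x) * (v x - γ)) * (u x - v x))
      volume 0 1 := by
    apply ContinuousOn.intervalIntegrable
    rw [hIccU]
    exact (((hucont.mul ((continuousOn_const.sub hucont))).mul (hucont.sub continuousOn_const)).sub
      ((hvcont.mul ((continuousOn_const.sub hvcont))).mul
        (hvcont.sub continuousOn_const))).mul (hucont.sub hvcont)
  -- FTC 1 : ∫ w² w' = 0
  have hFTC1 : ∫ x in (0:ℝ)..1, (u x - v x) * (u x - v x) * (u' x - v' x) = 0 := by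
    have hder : ∀ x ∈ Set.uIcc (0:ℝ) 1,
        HasDerivAt (fun y => (u y - v y) ^ 3 / 3)
          ((u x - v x) * (u x - v x) * (u' x - v' x)) x := by
      intro x hx
      rw [hIccU] at hx
      have hw : HasDerivAt (fun y => u y - v y) (u' x - v' x) x := (hu x hx).sub (hv x hx)
      have := (hw.pow 3).div_const 3
      refine this.congr_deriv ?_
      push_cast
      ring
    have := intervalIntegral.integral_eq_sub_of_hasDerivAt hder hIw2w'
    rw [this, hu0, hu1, hv0, hv1]
    norm_num
  -- FTC 2 : ∫ (v' w² + 2 v w w') = 0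
  have hFTC2 : ∫ x in (0:ℝ)..1, (v' x * ((u x - v x) * (u x - v x))
      + 2 * (v x * (u x - v x) * (u' x - v' x))) = 0 := by
    have hder : ∀ x ∈ Set.uIcc (0:ℝ) 1,
        HasDerivAt (fun y => v y * (u y - v y) ^ 2)
          (v' x * ((u x - v x) * (u x - v x))
            + 2 * (v x * (u x - v x) * (u' x - v' x))) x := by
      intro x hx
      rw [hIccU] at hx
      have hw : HasDerivAt (fun y => u y - v y) (u' x - v' x) x := (hu x hx).sub (hv x hx)
      have := (hv x hx).mul (hw.pow 2)
      refine this.congr_deriv ?_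
      push_cast [Pi.pow_apply]
      ring
    have := intervalIntegral.integral_eq_sub_of_hasDerivAt hder hIg2
    rw [this, hu0, hu1, hv0, hv1]
    norm_num
  -- the convection integral equals -∫ v w w'
  have hJ : ∫ x in (0:ℝ)..1, (u x * u' x - v x * v' x) * (u x - v x)
      = - ∫ x in (0:ℝ)..1, v x * (u x - v x) * (u' x - v' x) := by
    have hfun : (fun x => (u x * u' x - v x * v' x) * (u x - v x))
        = fun x => ((u x - v x) * (u x - v x) * (u' x - v' x)
          + (v' x * ((u x - v x) * (u x - v x)) + 2 * (v x * (u x - v x) * (u' x - v' x))))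
          - v x * (u x - v x) * (u' x - v' x) := by
      funext x; ring
    rw [hfun, intervalIntegral.integral_sub (hIw2w'.add hIg2) hIvww',
      intervalIntegral.integral_add hIw2w' hIg2, hFTC1, hFTC2]
    ring
  -- pointwise nonnegativity of the combined integrand
  have hpt : ∀ x ∈ Icc (0:ℝ) 1,
      0 ≤ ((ν / 2 * (u' x - v' x) ^ 2 - α * (v x * (u x - v x) * (u' x - v' x)))
        - β * ((u x * (1 - u x) * (u x - γ) - v x * (1 - v x) * (v x - γ)) * (u x - v x)))
        + (α ^ 2 * r ^ 2 / (2 * ν) + β * (1 + γ + γ ^ 2)) * (u x - v x) ^ 2 := by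
    intro x hx
    have hB := hvr x hx
    set A := u x; set B := v x; set a := u' x; set b := v' x
    have hcub : (A * (1 - A) * (A - γ) - B * (1 - B) * (B - γ)) * (A - B)
        ≤ (1 + γ + γ ^ 2) * (A - B) ^ 2 := by
      nlinarith [sq_nonneg ((A - B) * (A + B - 2 * (1 + γ) / 3)), sq_nonneg ((A - B) ^ 2),
        sq_nonneg ((A - B) * (1 + γ)), sq_nonneg (A - B)]
    have hconv : α * (B * (A - B) * (a - b))
        ≤ ν / 2 * (a - b) ^ 2 + α ^ 2 * r ^ 2 / (2 * ν) * (A - B) ^ 2 := by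
      have hB2 : B ^ 2 ≤ r ^ 2 := by nlinarith [abs_le.mp hB, abs_nonneg B]
      have hq : α ^ 2 * r ^ 2 / (2 * ν) * (2 * ν) = α ^ 2 * r ^ 2 := by field_simp
      nlinarith [sq_nonneg (ν * (a - b) - α * B * (A - B)),
        mul_nonneg (mul_nonneg (sq_nonneg α) (sub_nonneg.mpr hB2)) (sq_nonneg (A - B)), hν,
        mul_pos two_pos hν]
    nlinarith [mul_le_mul_of_nonneg_left hcub hβ.le, hconv]
  -- integral of the combined integrand is nonneg
  have hmain : 0 ≤ ∫ x in (0:ℝ)..1,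
      (((ν / 2 * (u' x - v' x) ^ 2 - α * (v x * (u x - v x) * (u' x - v' x)))
        - β * ((u x * (1 - u x) * (u x - γ) - v x * (1 - v x) * (v x - γ)) * (u x - v x)))
        + (α ^ 2 * r ^ 2 / (2 * ν) + β * (1 + γ + γ ^ 2)) * (u x - v x) ^ 2) :=
    intervalIntegral.integral_nonneg h01 (fun x hx => hpt x hx)
  -- split the combined integral
  have hsplit : (∫ x in (0:ℝ)..1,
      (((ν / 2 * (u' x - v' x) ^ 2 - α * (v x * (u x - v x) * (u' x - v' x)))
        - β * ((u x * (1 - u x) * (u x - γ) - v x * (1 - v x) * (v x - γ)) * (u x - v x)))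
        + (α ^ 2 * r ^ 2 / (2 * ν) + β * (1 + γ + γ ^ 2)) * (u x - v x) ^ 2))
      = ν / 2 * (∫ x in (0:ℝ)..1, (u' x - v' x) ^ 2)
        - α * (∫ x in (0:ℝ)..1, v x * (u x - v x) * (u' x - v' x))
        - β * (∫ x in (0:ℝ)..1,
            (u x * (1 - u x) * (u x - γ) - v x * (1 - v x) * (v x - γ)) * (u x - v x))
        + (α ^ 2 * r ^ 2 / (2 * ν) + β * (1 + γ + γ ^ 2))
          * ∫ x in (0:ℝ)..1, (u x - v x) ^ 2 := by
    rw [intervalIntegral.integral_add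
        (((hIw'2.const_mul _).sub (hIvww'.const_mul _)).sub (hIcd.const_mul _))
        (hIw2.const_mul _),
      intervalIntegral.integral_sub ((hIw'2.const_mul _).sub (hIvww'.const_mul _))
        (hIcd.const_mul _),
      intervalIntegral.integral_sub (hIw'2.const_mul _) (hIvww'.const_mul _),
      intervalIntegral.integral_const_mul, intervalIntegral.integral_const_mul,
      intervalIntegral.integral_const_mul, intervalIntegral.integral_const_mul]
  rw [hsplit] at hmain
  have hI1 : 0 ≤ ∫ x in (0:ℝ)..1, (u' x - v' x) ^ 2 :=
    intervalIntegral.integral_nonneg h01 (fun x _ => sq_nonneg _)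
  constructor
  · rw [hJ]
    nlinarith [hmain]
  · positivity
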